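/- Let a and b be two distinct real numbers, and let V₁, …, V_n be i.i.d. random variables with Pr[V₁ = a] ≥ 1/3 and Pr[V₁ = b] ≥ 1/3. Let N := #{1 ≤ i ≤ n−1 : V_i = a and V_{i+1} = b}. Then E[N] ≥ (n−1)/9 and Var[N] ≤ n, and there is an absolute constant n₀ such that for all n ≥ n₀, Pr[N ≥ n/10] ≥ 99/100. -/

import Mathlib

open MeasureTheory ProbabilityTheory
open scoped Classical

set_option maxHeartbeats 2000000 in
theorem border_pairs_count :
    ∃ n₀ : ℕ,
      ∀ (n : ℕ) (a b : ℝ), 0 < n → a ≠ b →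
        ∀ (Ω : Type) (mΩ : MeasurableSpace Ω) (P : Measure Ω),
          IsProbabilityMeasure P →
          ∀ V : ℕ → Ω → ℝ,
            (∀ i, Measurable (V i)) →
            iIndepFun (fun i : Fin n => V (i : ℕ)) P →
            (∀ i : Fin n, Measure.map (V (i : ℕ)) P = Measure.map (V 0) P) →
            ENNReal.ofReal (1 / 3) ≤ P {ω | V 0 ω = a} →
            ENNReal.ofReal (1 / 3) ≤ P {ω | V 0 ω = b} →
            ∀ N : Ω → ℕ,
              (∀ ω, N ω =
                ((Finset.range (n - 1)).filter
                  (fun i => V i ω = a ∧ V (i + 1) ω = b)).card) →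
              ((n : ℝ) - 1) / 9 ≤ (∫ ω, (N ω : ℝ) ∂P) ∧
              variance (fun ω => (N ω : ℝ)) P ≤ (n : ℝ) ∧
              (n₀ ≤ n →
                ENNReal.ofReal (99 / 100) ≤ P {ω | (n : ℝ) / 10 ≤ (N ω : ℝ)}) := by
  refine ⟨1000000, ?_⟩
  intro n a b hn hab Ω mΩ P hP V hV hindep hident ha hb N hNdef
  set m := n - 1 with hm
  set S : ℕ → Set Ω := fun i => V i ⁻¹' {a} ∩ V (i+1) ⁻¹' {b} with hSdef
  have hSmeas : ∀ i, MeasurableSet (S i) := fun i =>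
    ((hV i) (measurableSet_singleton a)).inter ((hV (i+1)) (measurableSet_singleton b))
  set p := (P (V 0 ⁻¹' {a})).toReal with hpdef
  set q := (P (V 0 ⁻¹' {b})).toReal with hqdef
  have hsetA : {ω | V 0 ω = a} = V 0 ⁻¹' {a} := by ext ω; simp
  have hsetB : {ω | V 0 ω = b} = V 0 ⁻¹' {b} := by ext ω; simp
  have hp13 : (1:ℝ)/3 ≤ p := by
    rw [hsetA] at ha
    exact (ENNReal.ofReal_le_iff_le_toReal (measure_ne_top P _)).mp ha
  have hq13 : (1:ℝ)/3 ≤ q := by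
    rw [hsetB] at hb
    exact (ENNReal.ofReal_le_iff_le_toReal (measure_ne_top P _)).mp hb
  have hp1 : p ≤ 1 := by
    have h := ENNReal.toReal_mono (by simp) (prob_le_one (μ := P) (s := V 0 ⁻¹' {a}))
    simpa using h
  have hq1 : q ≤ 1 := by
    have h := ENNReal.toReal_mono (by simp) (prob_le_one (μ := P) (s := V 0 ⁻¹' {b}))
    simpa using h
  have hp0 : 0 ≤ p := ENNReal.toReal_nonneg
  have hq0 : 0 ≤ q := ENNReal.toReal_nonneg
  have hmapA : ∀ i, i < n → P (V i ⁻¹' {a}) = P (V 0 ⁻¹' {a}) := by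
    intro i hi
    rw [← Measure.map_apply (hV i) (measurableSet_singleton a), hident ⟨i, hi⟩,
      Measure.map_apply (hV 0) (measurableSet_singleton a)]
  have hmapB : ∀ i, i < n → P (V i ⁻¹' {b}) = P (V 0 ⁻¹' {b}) := by
    intro i hi
    rw [← Measure.map_apply (hV i) (measurableSet_singleton b), hident ⟨i, hi⟩,
      Measure.map_apply (hV 0) (measurableSet_singleton b)]
  -- single-event probability
  have hrS : ∀ i, i + 1 < n → (P (S i)).toReal = p * q := by
    intro i hi
    have h2 := hindep.indepFun
      (show (⟨i, by omega⟩ : Fin n) ≠ ⟨i+1, hi⟩ by simp [Fin.ext_iff])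
    have h3 := h2.measure_inter_preimage_eq_mul {a} {b}
      (measurableSet_singleton a) (measurableSet_singleton b)
    have : P (S i) = P (V 0 ⁻¹' {a}) * P (V 0 ⁻¹' {b}) := by
      rw [hSdef]
      simp only []
      rw [h3, hmapA i (by omega), hmapB (i+1) hi]
    rw [this, ENNReal.toReal_mul]
  -- two disjoint events probability
  have hrS2 : ∀ i j, i + 1 < n → j + 1 < n → i + 1 < j →
      (P (S i ∩ S j)).toReal = (p * q) * (p * q) := by
    intro i j hi hj hij
    have hin : i < n := by omega
    have hjn : j < n := by omega
    set i₀ : Fin n := ⟨i, hin⟩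
    set i₁ : Fin n := ⟨i+1, hi⟩
    set j₀ : Fin n := ⟨j, hjn⟩
    set j₁ : Fin n := ⟨j+1, hj⟩
    set sets : Fin n → Set ℝ := fun k => if (k : ℕ) = i ∨ (k : ℕ) = j then {a} else {b} with hsets
    have hmeas : ∀ k : Fin n, k ∈ ({i₀, i₁, j₀, j₁} : Finset (Fin n)) → MeasurableSet (sets k) := by
      intro k _
      by_cases h : (k : ℕ) = i ∨ (k : ℕ) = j <;> simp [hsets, h]
    have key := hindep.measure_inter_preimage_eq_mul ({i₀, i₁, j₀, j₁} : Finset (Fin n)) hmeas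
    have h01 : i₀ ≠ i₁ := by simp [i₀, i₁, Fin.ext_iff]
    have h02 : i₀ ≠ j₀ := by simp [i₀, j₀, Fin.ext_iff]; omega
    have h03 : i₀ ≠ j₁ := by simp [i₀, j₁, Fin.ext_iff]; omega
    have h12 : i₁ ≠ j₀ := by simp [i₁, j₀, Fin.ext_iff]; omega
    have h13 : i₁ ≠ j₁ := by simp [i₁, j₁, Fin.ext_iff]; omega
    have h23 : j₀ ≠ j₁ := by simp [j₀, j₁, Fin.ext_iff]
    have hs0 : sets i₀ = {a} := by simp [hsets, i₀]
    have hs1 : sets i₁ = {b} := by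
      show (if i + 1 = i ∨ i + 1 = j then ({a} : Set ℝ) else {b}) = {b}
      rw [if_neg (by omega)]
    have hs2 : sets j₀ = {a} := by simp [hsets, j₀]
    have hs3 : sets j₁ = {b} := by
      show (if j + 1 = i ∨ j + 1 = j then ({a} : Set ℝ) else {b}) = {b}
      rw [if_neg (by omega)]
    rw [Finset.set_biInter_insert, Finset.set_biInter_insert, Finset.set_biInter_insert,
      Finset.set_biInter_singleton] at key
    rw [Finset.prod_insert (by simp [h01, h02, h03]),
      Finset.prod_insert (by simp [h12, h13]),
      Finset.prod_insert (by simp [h23]), Finset.prod_singleton] at key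
    simp only [hs0, hs1, hs2, hs3] at key
    have hSS : P (S i ∩ S j) = P (V 0 ⁻¹' {a}) * P (V 0 ⁻¹' {b})
        * (P (V 0 ⁻¹' {a}) * P (V 0 ⁻¹' {b})) := by
      rw [hSdef]
      simp only []
      rw [Set.inter_assoc, key, hmapA i hin, hmapB (i+1) hi, hmapA j hjn, hmapB (j+1) hj]
      ring
    rw [hSS, ENNReal.toReal_mul, ENNReal.toReal_mul, ← hpdef, ← hqdef]
  -- adjacent events are disjoint
  have hadj : ∀ i, S i ∩ S (i+1) = ∅ := by
    intro i
    rw [Set.eq_empty_iff_forall_notMem]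
    rintro ω ⟨⟨_, h2⟩, ⟨h3, _⟩⟩
    rw [Set.mem_preimage, Set.mem_singleton_iff] at h2 h3
    exact hab (h3.symm.trans h2)
  -- pairwise bound
  have haux : ∀ i j, i + 1 < n → j + 1 < n → i < j →
      (P (S i ∩ S j)).toReal ≤ (p * q) * (p * q) := by
    intro i j hi hj hij
    rcases eq_or_lt_of_le (Nat.succ_le_of_lt hij) with he | hlt
    · rw [← he, hadj i]
      simp only [measure_empty, ENNReal.toReal_zero]
      positivity
    · rw [hrS2 i j hi hj hlt]
  have hpair : ∀ i ∈ Finset.range m, ∀ j ∈ Finset.range m,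
      (P (S i ∩ S j)).toReal ≤ if i = j then p * q else (p * q) * (p * q) := by
    intro i hi j hj
    have hi' : i + 1 < n := by
      have := Finset.mem_range.mp hi; omega
    have hj' : j + 1 < n := by
      have := Finset.mem_range.mp hj; omega
    by_cases hij : i = j
    · subst hij
      rw [if_pos rfl, Set.inter_self]
      exact (hrS i hi').le
    · rw [if_neg hij]
      rcases lt_or_gt_of_ne hij with h | h
      · exact haux i j hi' hj' h
      · rw [Set.inter_comm]
        exact haux j i hj' hi' h
  -- indicator functions
  set X : ℕ → Ω → ℝ := fun i => (S i).indicator (fun _ => 1) with hXdef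
  have hNsum : ∀ ω, (N ω : ℝ) = ∑ i ∈ Finset.range m, X i ω := by
    intro ω
    rw [hNdef ω, Finset.card_filter]
    push_cast
    refine Finset.sum_congr rfl fun i _ => ?_
    by_cases h : V i ω = a ∧ V (i+1) ω = b <;>
      simp [hXdef, hSdef, Set.indicator_apply, Set.mem_inter_iff, h]
  have hXint : ∀ i, Integrable (X i) P := fun i =>
    (integrable_const (1:ℝ)).indicator (hSmeas i)
  have hXval : ∀ i, ∫ ω, X i ω ∂P = (P (S i)).toReal := by
    intro i
    have h := integral_indicator_const (μ := P) (1:ℝ) (hSmeas i)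
    simpa [hXdef, Measure.real] using h
  have hXmul : ∀ i j, (fun ω => X i ω * X j ω) = (S i ∩ S j).indicator (fun _ => (1:ℝ)) := by
    intro i j
    funext ω
    by_cases h1 : ω ∈ S i <;> by_cases h2 : ω ∈ S j <;>
      simp [hXdef, Set.indicator_apply, h1, h2, Set.mem_inter_iff]
  have hXmulint : ∀ i j, Integrable (fun ω => X i ω * X j ω) P := by
    intro i j
    rw [hXmul i j]
    exact (integrable_const (1:ℝ)).indicator ((hSmeas i).inter (hSmeas j))
  have hXmulval : ∀ i j, ∫ ω, X i ω * X j ω ∂P = (P (S i ∩ S j)).toReal := by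
    intro i j
    rw [hXmul i j]
    have h := integral_indicator_const (μ := P) (1:ℝ) ((hSmeas i).inter (hSmeas j))
    simpa [Measure.real] using h
  have hmem : ∀ i ∈ Finset.range m, i + 1 < n := by
    intro i hi
    have := Finset.mem_range.mp hi; omega
  -- expectation
  have hEN : ∫ ω, (N ω : ℝ) ∂P = (m : ℝ) * (p * q) := by
    simp_rw [hNsum]
    rw [integral_finset_sum _ (fun i _ => hXint i)]
    rw [Finset.sum_congr rfl (fun i hi => (hXval i).trans (hrS i (hmem i hi)))]
    rw [Finset.sum_const, Finset.card_range, nsmul_eq_mul]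
  have hmR : (m : ℝ) = (n : ℝ) - 1 := by
    rw [hm, Nat.cast_sub hn]
    simp
  have hnR1 : (1:ℝ) ≤ (n:ℝ) := by exact_mod_cast hn
  have hpq9 : (1:ℝ)/9 ≤ p * q := by nlinarith
  have hpq1 : p * q ≤ 1 := by nlinarith
  have goal1 : ((n : ℝ) - 1) / 9 ≤ ∫ ω, (N ω : ℝ) ∂P := by
    rw [hEN, hmR]
    nlinarith
  -- MemLp
  have hfeq : (fun ω => (N ω : ℝ)) = fun ω => ∑ i ∈ Finset.range m, X i ω := funext hNsum
  have hXmem : ∀ i, MemLp (X i) 2 P := fun i => (memLp_const (1:ℝ)).indicator (hSmeas i)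
  have hMem : MemLp (fun ω => (N ω : ℝ)) 2 P := by
    rw [hfeq]
    exact memLp_finset_sum _ (fun i _ => hXmem i)
  -- second moment
  have hEN2 : ∫ ω, ((N ω : ℝ))^2 ∂P
      = ∑ i ∈ Finset.range m, ∑ j ∈ Finset.range m, (P (S i ∩ S j)).toReal := by
    have hptw : ∀ ω, ((N ω : ℝ))^2
        = ∑ i ∈ Finset.range m, ∑ j ∈ Finset.range m, X i ω * X j ω := by
      intro ω
      rw [hNsum ω, sq, Finset.sum_mul_sum]
    simp_rw [hptw]
    rw [integral_finset_sum _ (fun i _ => integrable_finset_sum _ (fun j _ => hXmulint i j))]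
    refine Finset.sum_congr rfl fun i _ => ?_
    rw [integral_finset_sum _ (fun j _ => hXmulint i j)]
    exact Finset.sum_congr rfl fun j _ => hXmulval i j
  -- sum bound
  have hinner : ∀ i ∈ Finset.range m,
      ∑ j ∈ Finset.range m, (if i = j then p * q else (p * q) * (p * q))
        ≤ p * q + (m : ℝ) * ((p * q) * (p * q)) := by
    intro i hi
    rw [← Finset.add_sum_erase _ _ hi, if_pos rfl]
    have herase : ∑ j ∈ (Finset.range m).erase i, (if i = j then p * q else (p * q) * (p * q))
        = (((Finset.range m).erase i).card : ℝ) * ((p * q) * (p * q)) := by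
      rw [Finset.sum_congr rfl (fun j hj => if_neg (Ne.symm (Finset.ne_of_mem_erase hj)))]
      rw [Finset.sum_const, nsmul_eq_mul]
    rw [herase]
    have hcard : (((Finset.range m).erase i).card : ℝ) ≤ (m : ℝ) := by
      have := Finset.card_erase_le (s := Finset.range m) (a := i)
      rw [Finset.card_range] at this
      exact_mod_cast this
    nlinarith [mul_nonneg (mul_nonneg hp0 hq0) (mul_nonneg hp0 hq0)]
  have hsum2 : ∫ ω, ((N ω : ℝ))^2 ∂P
      ≤ (m : ℝ) * (p * q + (m : ℝ) * ((p * q) * (p * q))) := by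
    rw [hEN2]
    calc ∑ i ∈ Finset.range m, ∑ j ∈ Finset.range m, (P (S i ∩ S j)).toReal
        ≤ ∑ i ∈ Finset.range m, ∑ j ∈ Finset.range m,
            (if i = j then p * q else (p * q) * (p * q)) :=
          Finset.sum_le_sum (fun i hi => Finset.sum_le_sum (fun j hj => hpair i hi j hj))
      _ ≤ ∑ i ∈ Finset.range m, (p * q + (m : ℝ) * ((p * q) * (p * q))) :=
          Finset.sum_le_sum hinner
      _ = (m : ℝ) * (p * q + (m : ℝ) * ((p * q) * (p * q))) := by
          rw [Finset.sum_const, Finset.card_range, nsmul_eq_mul]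
  -- variance
  have hvar := variance_eq_sub hMem
  simp only [Pi.pow_apply] at hvar
  have goal2 : variance (fun ω => (N ω : ℝ)) P ≤ (n : ℝ) := by
    rw [hvar, hEN]
    nlinarith [hsum2, mul_nonneg hp0 hq0, hmR, hnR1]
  refine ⟨goal1, goal2, ?_⟩
  -- Chebyshev part
  intro hn0
  have hnR : (1000000 : ℝ) ≤ (n : ℝ) := by exact_mod_cast hn0
  have hfmeas : Measurable (fun ω => (N ω : ℝ)) := by
    rw [hfeq]
    exact Finset.measurable_sum _ (fun i _ => measurable_const.indicator (hSmeas i))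
  have hT : MeasurableSet {ω | (n : ℝ) / 10 ≤ (N ω : ℝ)} :=
    measurableSet_le measurable_const hfmeas
  have hc : 0 < (∫ ω, (N ω : ℝ) ∂P) - (n : ℝ) / 10 := by linarith [goal1]
  have hcheb := meas_ge_le_variance_div_sq hMem hc
  have hdiv : variance (fun ω => (N ω : ℝ)) P / ((∫ ω, (N ω : ℝ) ∂P) - (n : ℝ) / 10)^2
      ≤ 1/100 := by
    rw [div_le_iff₀ (by positivity)]
    have h2 : ((n:ℝ) - 10)/90 ≤ (∫ ω, (N ω : ℝ) ∂P) - (n : ℝ) / 10 := by linarith [goal1]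
    have h3 : (0:ℝ) ≤ ((n:ℝ) - 10)/90 := by linarith
    have h4 : (((n:ℝ) - 10)/90)^2 ≤ ((∫ ω, (N ω : ℝ) ∂P) - (n : ℝ) / 10)^2 := by
      nlinarith
    nlinarith [goal2, mul_le_mul_of_nonneg_right hnR (by positivity : (0:ℝ) ≤ (n:ℝ))]
  have hcompl : P {ω | (n : ℝ) / 10 ≤ (N ω : ℝ)}ᶜ ≤ ENNReal.ofReal (1/100) := by
    refine le_trans (measure_mono ?_) (le_trans hcheb (ENNReal.ofReal_le_ofReal hdiv))
    intro ω hω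
    simp only [Set.mem_compl_iff, Set.mem_setOf_eq, not_le] at hω
    show (∫ ω, (N ω : ℝ) ∂P) - (n : ℝ) / 10 ≤ |(N ω : ℝ) - ∫ ω, (N ω : ℝ) ∂P|
    rw [abs_sub_comm]
    refine le_trans ?_ (le_abs_self _)
    linarith
  have h1 : P {ω | (n : ℝ) / 10 ≤ (N ω : ℝ)} + P {ω | (n : ℝ) / 10 ≤ (N ω : ℝ)}ᶜ = 1 :=
    by rw [measure_add_measure_compl hT, measure_univ]
  have h2 : ENNReal.ofReal (99/100) + ENNReal.ofReal (1/100) = 1 := by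
    rw [← ENNReal.ofReal_add (by norm_num) (by norm_num)]
    norm_num
  have h3 : ENNReal.ofReal (99/100) + P {ω | (n : ℝ) / 10 ≤ (N ω : ℝ)}ᶜ
      ≤ P {ω | (n : ℝ) / 10 ≤ (N ω : ℝ)} + P {ω | (n : ℝ) / 10 ≤ (N ω : ℝ)}ᶜ := by
    rw [h1]
    calc ENNReal.ofReal (99/100) + P {ω | (n : ℝ) / 10 ≤ (N ω : ℝ)}ᶜ
        ≤ ENNReal.ofReal (99/100) + ENNReal.ofReal (1/100) := add_le_add_right hcompl _
      _ = 1 := h2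
  exact (ENNReal.add_le_add_iff_right (measure_ne_top P _)).mp h3
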